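/- arXiv:1512.03985 — 4 statements merged into one kernel-verified Lean document; each statement's English description precedes it below -/
import Mathlib

section
/- For any g_r1, g_r2 > 0, the function (R21, R22) ↦ (2^(R21) - 1)/g_r1 + max((2^(R22) - 1)/g_r2, 2^(R21)(2^(R22) - 1)/g_r1) is convex on the domain R21, R22 ≥ 0. -/
open Real

lemma quadrant_convex : Convex ℝ {p : ℝ × ℝ | 0 ≤ p.1 ∧ 0 ≤ p.2} := by
  have h1 : Convex ℝ {p : ℝ × ℝ | 0 ≤ p.1} :=
    convex_halfSpace_ge (LinearMap.fst ℝ ℝ ℝ).isLinear 0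
  have h2 : Convex ℝ {p : ℝ × ℝ | 0 ≤ p.2} :=
    convex_halfSpace_ge (LinearMap.snd ℝ ℝ ℝ).isLinear 0
  exact h1.inter h2

lemma aux_convex (a b : ℝ) :
    ConvexOn ℝ {p : ℝ × ℝ | 0 ≤ p.1 ∧ 0 ≤ p.2}
      (fun p : ℝ × ℝ => Real.exp (a * p.1 + b * p.2)) := by
  set L : (ℝ × ℝ) →ₗ[ℝ] ℝ := a • LinearMap.fst ℝ ℝ ℝ + b • LinearMap.snd ℝ ℝ ℝ with hL
  have h := convexOn_exp.comp_affineMap L.toAffineMap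
  have h2 : ConvexOn ℝ (Set.univ : Set (ℝ × ℝ)) (Real.exp ∘ L.toAffineMap) := by
    simpa using h
  have h3 := h2.subset (Set.subset_univ _) quadrant_convex
  convert h3 using 1
  funext p
  simp [hL]

lemma pow_convex (a b : ℝ) :
    ConvexOn ℝ {p : ℝ × ℝ | 0 ≤ p.1 ∧ 0 ≤ p.2}
      (fun p : ℝ × ℝ => (2:ℝ) ^ (a * p.1 + b * p.2)) := by
  have := aux_convex (Real.log 2 * a) (Real.log 2 * b)
  convert this using 2 with p
  rw [Real.rpow_def_of_pos two_pos]
  ring_nf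

/-- The DNC downlink total power function is convex on the nonnegative quadrant. -/
theorem stmt_5 (gr1 gr2 : ℝ) (hg1 : 0 < gr1) (hg2 : 0 < gr2) :
    ConvexOn ℝ {p : ℝ × ℝ | 0 ≤ p.1 ∧ 0 ≤ p.2}
      (fun p : ℝ × ℝ =>
        ((2:ℝ) ^ p.1 - 1) / gr1 +
          max (((2:ℝ) ^ p.2 - 1) / gr2) ((2:ℝ) ^ p.1 * ((2:ℝ) ^ p.2 - 1) / gr1)) := by
  have key : (fun p : ℝ × ℝ =>
        ((2:ℝ) ^ p.1 - 1) / gr1 +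
          max (((2:ℝ) ^ p.2 - 1) / gr2) ((2:ℝ) ^ p.1 * ((2:ℝ) ^ p.2 - 1) / gr1))
      = fun p : ℝ × ℝ =>
        max (((2:ℝ) ^ p.1 - 1) / gr1 + ((2:ℝ) ^ p.2 - 1) / gr2)
          (((2:ℝ) ^ (p.1 + p.2) - 1) / gr1) := by
    funext p
    rw [← max_add_add_left]
    congr 1
    rw [Real.rpow_add two_pos]
    field_simp
    ring
  rw [key]
  -- convexity of the two branches
  have hmul : ∀ c : ℝ, 0 < c → ∀ a b : ℝ,
      ConvexOn ℝ {p : ℝ × ℝ | 0 ≤ p.1 ∧ 0 ≤ p.2}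
        (fun p : ℝ × ℝ => ((2:ℝ) ^ (a * p.1 + b * p.2) - 1) / c) := by
    intro c hc a b
    have h1 := (pow_convex a b).smul (le_of_lt (inv_pos.mpr hc))
    have h2 : ConvexOn ℝ {p : ℝ × ℝ | 0 ≤ p.1 ∧ 0 ≤ p.2}
        (fun p : ℝ × ℝ => c⁻¹ • (2:ℝ) ^ (a * p.1 + b * p.2) - c⁻¹) :=
      h1.sub (concaveOn_const _ quadrant_convex)
    convert h2 using 2 with p
    rw [smul_eq_mul, sub_div]
    ring
  have hA : ConvexOn ℝ {p : ℝ × ℝ | 0 ≤ p.1 ∧ 0 ≤ p.2}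
      (fun p : ℝ × ℝ => ((2:ℝ) ^ p.1 - 1) / gr1 + ((2:ℝ) ^ p.2 - 1) / gr2) := by
    have h1 := hmul gr1 hg1 1 0
    have h2 := hmul gr2 hg2 0 1
    have := h1.add h2
    simp at this
    exact this
  have hB : ConvexOn ℝ {p : ℝ × ℝ | 0 ≤ p.1 ∧ 0 ≤ p.2}
      (fun p : ℝ × ℝ => ((2:ℝ) ^ (p.1 + p.2) - 1) / gr1) := by
    have := hmul gr1 hg1 1 1
    simpa using this
  exact hA.sup hB
end

section
/- In the two-user multiple-access power-minimization Lagrangian with multipliers β11, β12 > 0 and gains g1 > g2 > 0: if β12 ≤ β11 then at the stationary point user 2 is allocated zero power and user 1 gets P11 = (β11·log₂e - 1/g1)⁺; i.e., the function (P1, P2) ↦ P1 + P2 - β11·log₂(1 + P1·g1/(1 + P2·g2)) - β12·log₂(1 + P2·g2) over P1, P2 ≥ 0 is minimized with P2 = 0 when β12 ≤ β11. -/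
/-- One-variable key inequality: `t - a * log (1 + t*g1)` over `t ≥ 0` is
minimized at `t = max (a - 1/g1) 0`. -/
lemma key_one_var (g1 a : ℝ) (hg1 : 0 < g1) (ha : 0 < a) (t : ℝ) (ht : 0 ≤ t) :
    max (a - 1/g1) 0 - a * Real.log (1 + max (a - 1/g1) 0 * g1)
      ≤ t - a * Real.log (1 + t * g1) := by
  rcases le_or_gt a (1/g1) with hcase | hcase
  · rw [max_eq_right (by linarith)]
    simp only [zero_mul, add_zero, Real.log_one, mul_zero, sub_zero, zero_sub,
      neg_le_sub_iff_le_add]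
    have hlog : Real.log (1 + t * g1) ≤ t * g1 := by
      have := Real.log_le_sub_one_of_pos (show 0 < 1 + t * g1 by positivity)
      linarith
    have hag : a * g1 ≤ 1 := by
      have := (le_div_iff₀ hg1).mp hcase
      linarith
    nlinarith [mul_le_mul_of_nonneg_left hlog ha.le]
  · rw [max_eq_left (by linarith)]
    have h1 : 1 + (a - 1/g1) * g1 = a * g1 := by field_simp; ring
    rw [h1]
    have hag : 0 < a * g1 := by positivity
    have htg : 0 < 1 + t * g1 := by positivity
    have hlog : Real.log ((1 + t * g1) / (a * g1)) ≤ (1 + t * g1) / (a * g1) - 1 :=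
      Real.log_le_sub_one_of_pos (by positivity)
    rw [Real.log_div htg.ne' hag.ne'] at hlog
    have hmul := mul_le_mul_of_nonneg_left hlog ha.le
    have heq : a * ((1 + t * g1) / (a * g1) - 1) = t + 1/g1 - a := by
      field_simp
      ring
    rw [heq] at hmul
    linarith

/-- Lemma 1, case 1: when `β12 ≤ β11` (with `g1 > g2 > 0`), the multi-access
Lagrangian is minimized over the nonnegative quadrant with user 2 silent and
`P11 = (β11·log₂e - 1/g1)⁺`. -/
theorem stmt_15 (g1 g2 β11 β12 : ℝ) (hg2 : 0 < g2) (hg : g2 < g1)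
    (hβ11 : 0 < β11) (hβ12 : 0 < β12) (hle : β12 ≤ β11) :
    IsMinOn
      (fun p : ℝ × ℝ =>
        p.1 + p.2 - β11 * Real.logb 2 (1 + p.1 * g1 / (1 + p.2 * g2))
          - β12 * Real.logb 2 (1 + p.2 * g2))
      {p : ℝ × ℝ | 0 ≤ p.1 ∧ 0 ≤ p.2}
      (max (β11 / Real.log 2 - 1 / g1) 0, 0) := by
  have hc : (0:ℝ) < Real.log 2 := Real.log_pos (by norm_num)
  have hg1 : 0 < g1 := hg2.trans hg
  set a := β11 / Real.log 2 with ha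
  have ha0 : 0 < a := div_pos hβ11 hc
  rw [isMinOn_iff]
  rintro ⟨P1, P2⟩ ⟨hP1, hP2⟩
  simp only [Real.logb]
  have hr : (0:ℝ) < 1 + P2 * g2 := by positivity
  have hq : (0:ℝ) < 1 + P1 * g1 / (1 + P2 * g2) := by positivity
  have hlogr : 0 ≤ Real.log (1 + P2 * g2) := Real.log_nonneg (by nlinarith)
  have hqr : (1 + P1 * g1 / (1 + P2 * g2)) * (1 + P2 * g2) = 1 + P1 * g1 + P2 * g2 := by
    field_simp
    ring
  have hsum : Real.log (1 + P1 * g1 / (1 + P2 * g2)) + Real.log (1 + P2 * g2)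
      = Real.log (1 + P1 * g1 + P2 * g2) := by
    rw [← Real.log_mul hq.ne' hr.ne', hqr]
  have hmono : Real.log (1 + P1 * g1 + P2 * g2) ≤ Real.log (1 + (P1 + P2) * g1) :=
    Real.log_le_log (by positivity) (by nlinarith)
  have key := key_one_var g1 a hg1 ha0 (P1 + P2) (by linarith)
  have e : ∀ x : ℝ, β11 * (x / Real.log 2) = a * x := by
    intro x; rw [ha]; field_simp
  simp only [mul_zero, zero_mul, add_zero, div_one, Real.log_one, zero_div, sub_zero, e]
  have h12 : β12 * (Real.log (1 + P2 * g2) / Real.log 2) ≤ a * Real.log (1 + P2 * g2) := by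
    calc β12 * (Real.log (1 + P2 * g2) / Real.log 2)
        ≤ β11 * (Real.log (1 + P2 * g2) / Real.log 2) :=
          mul_le_mul_of_nonneg_right hle (div_nonneg hlogr hc.le)
      _ = a * Real.log (1 + P2 * g2) := e _
  have hs2 : a * Real.log (1 + P1 * g1 / (1 + P2 * g2)) + a * Real.log (1 + P2 * g2)
      = a * Real.log (1 + P1 * g1 + P2 * g2) := by rw [← mul_add, hsum]
  have hm2 := mul_le_mul_of_nonneg_left hmono ha0.le
  linarith
end

section
/- For gains g1 > g2 > 0 and multipliers β11, β12 with β11·g1 > β12·g2 and β12 - β11 > (g1 - g2)/(g1·g2), the interior stationary point of the Lagrangian P1 + P2 - β11·R11 - β12·R12 (with R11 = log₂(1 + P1·g1/(1 + P2·g2)), R12 = log₂(1 + P2·g2)) is P1* = (β11·g1 - β12·g2)·log₂e/(g1 - g2) and P2* = (β12 - β11)·g1·log₂e/(g1 - g2) - 1/g2, and both values are strictly positive under the stated conditions. -/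
set_option maxRecDepth 4000 in
/-- Lemma 1, case 2, Case III: the interior stationary point of the
multi-access Lagrangian, with both powers strictly positive. -/
theorem stmt_16 (g1 g2 β11 β12 : ℝ) (hg2 : 0 < g2) (hg : g2 < g1)
    (h1 : β12 * g2 < β11 * g1)
    (h2 : (g1 - g2) / (g1 * g2) < β12 - β11) :
    let P1s : ℝ := (β11 * g1 - β12 * g2) / Real.log 2 / (g1 - g2)
    let P2s : ℝ := (β12 - β11) * g1 / Real.log 2 / (g1 - g2) - 1 / g2
    0 < P1s ∧ 0 < P2s ∧
    HasDerivAt (fun P1 : ℝ =>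
        P1 + P2s - β11 * Real.logb 2 (1 + P1 * g1 / (1 + P2s * g2))
          - β12 * Real.logb 2 (1 + P2s * g2)) 0 P1s ∧
    HasDerivAt (fun P2 : ℝ =>
        P1s + P2 - β11 * Real.logb 2 (1 + P1s * g1 / (1 + P2 * g2))
          - β12 * Real.logb 2 (1 + P2 * g2)) 0 P2s := by
  have hL2 : (0:ℝ) < Real.log 2 := Real.log_pos one_lt_two
  have hL2' : Real.log 2 < 1 := by
    have := Real.log_two_lt_d9; linarith
  have hd : (0:ℝ) < g1 - g2 := sub_pos.mpr hg
  have hg1 : (0:ℝ) < g1 := hg2.trans hg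
  intro P1s P2s
  have hnum : (0:ℝ) < β11 * g1 - β12 * g2 := sub_pos.mpr h1
  have hP1 : 0 < P1s := div_pos (div_pos hnum hL2) hd
  have hdiff : (0:ℝ) < β12 - β11 :=
    lt_trans (div_pos hd (mul_pos hg1 hg2)) h2
  have h2' : g1 - g2 < (β12 - β11) * (g1 * g2) :=
    (div_lt_iff₀ (mul_pos hg1 hg2)).mp h2
  have hP2 : 0 < P2s := by
    have : 1 / g2 < (β12 - β11) * g1 / Real.log 2 / (g1 - g2) := by
      rw [div_div, div_lt_div_iff₀ hg2 (mul_pos hL2 hd)]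
      nlinarith
    exact sub_pos.mpr this
  have hApos : (0:ℝ) < 1 + P2s * g2 := by nlinarith [mul_pos hP2 hg2]
  have hargpos : (0:ℝ) < 1 + P1s * g1 / (1 + P2s * g2) := by
    have := div_pos (mul_pos hP1 hg1) hApos
    linarith
  refine ⟨hP1, hP2, ?_, ?_⟩
  · simp only [Real.logb]
    have hinner : HasDerivAt (fun P1 : ℝ => 1 + P1 * g1 / (1 + P2s * g2))
        (1 * g1 / (1 + P2s * g2)) P1s :=
      (((hasDerivAt_id P1s).mul_const g1).div_const (1 + P2s * g2)).const_add 1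
    have hlog := hinner.log (ne_of_gt hargpos)
    have hfull := (((hasDerivAt_id P1s).add_const P2s).sub
        ((hlog.div_const (Real.log 2)).const_mul β11)).sub_const
        (β12 * (Real.log (1 + P2s * g2) / Real.log 2))
    refine hfull.congr_deriv ?_
    symm
    have hB : (1 + P2s * g2 + P1s * g1) * Real.log 2 = β11 * g1 := by
      simp only [P1s, P2s]
      field_simp
      ring
    field_simp
    nlinarith [hApos, hargpos, hL2]
  · simp only [Real.logb]
    have hB2 : HasDerivAt (fun P2 : ℝ => 1 + P2 * g2) (1 * g2) P2s :=
      ((hasDerivAt_id P2s).mul_const g2).const_add 1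
    have hinner : HasDerivAt (fun P2 : ℝ => 1 + P1s * g1 / (1 + P2 * g2))
        ((0 * (1 + P2s * g2) - (P1s * g1) * (1 * g2)) / (1 + P2s * g2) ^ 2) P2s :=
      ((hasDerivAt_const P2s (P1s * g1)).div hB2 (ne_of_gt hApos)).const_add 1
    have hlog1 := hinner.log (ne_of_gt hargpos)
    have hlog2 := hB2.log (ne_of_gt hApos)
    have hfull := (((hasDerivAt_id P2s).const_add P1s).sub
        ((hlog1.div_const (Real.log 2)).const_mul β11)).sub
        ((hlog2.div_const (Real.log 2)).const_mul β12)
    refine hfull.congr_deriv ?_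
    symm
    have hB : (1 + P2s * g2 + P1s * g1) * Real.log 2 = β11 * g1 := by
      simp only [P1s, P2s]
      field_simp
      ring
    have hAval : (1 + P2s * g2) * (Real.log 2 * (g1 - g2)) = (β12 - β11) * g1 * g2 := by
      simp only [P2s]
      field_simp
      ring
    have hP1val : P1s * (Real.log 2 * (g1 - g2)) = β11 * g1 - β12 * g2 := by
      simp only [P1s]
      field_simp
    clear_value P1s P2s
    have hC : (1 + P2s * g2) * Real.log 2 + P1s * g2 * Real.log 2 = β12 * g2 := by
      have hz : ((1 + P2s * g2) * Real.log 2 + P1s * g2 * Real.log 2 - β12 * g2) * (g1 - g2) = 0 := by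
        linear_combination hAval + g2 * hP1val
      rcases mul_eq_zero.mp hz with h | h
      · linarith
      · exact absurd h (ne_of_gt hd)
    field_simp
    linear_combination (P1s*g2) * hB
      - (1+P2s*g2+P1s*g1) * hC
end

section
/- For g1, g2 > 0, the PNC power-splitting with matched SNR, P_i = (2^R - 1/2)/g_i for i = 1, 2, satisfies: minimizing P1 + P2 - β·R over R (with β > 0) yields total power P1* + P2* = (β·log₂e - (1/2)(1/g1 + 1/g2))⁺ and individual powers P_i* = (β·log₂e·g_{3-i}/(g1+g2) - 1/(2·g_i))⁺ whenever the total is positive. -/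
lemma key_exp (R R0 : ℝ) :
    (2:ℝ) ^ R0 * (1 + (R - R0) * Real.log 2) ≤ (2:ℝ) ^ R := by
  have h2 : (0:ℝ) < 2 := two_pos
  have hsplit : (2:ℝ) ^ R = 2 ^ R0 * 2 ^ (R - R0) := by
    rw [← Real.rpow_add h2]; ring_nf
  have hexp : (2:ℝ) ^ (R - R0) = Real.exp ((R - R0) * Real.log 2) := by
    rw [Real.rpow_def_of_pos h2]; ring_nf
  have hle := Real.add_one_le_exp ((R - R0) * Real.log 2)
  have hpos := Real.rpow_pos_of_pos h2 R0
  rw [hsplit, hexp]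
  nlinarith

/-- Optimal PNC uplink power allocation: minimizing `P1 + P2 - β·R` over the
rates `R` with nonnegative matched powers `P_i = (2^R - 1/2)/g_i` (i.e. `R ≥ -1`)
yields total power `(β·log₂e - (1/2)(1/g1 + 1/g2))⁺` and individual powers
`P_i* = (β·log₂e·g_{3-i}/(g1+g2) - 1/(2g_i))⁺` whenever the total is positive. -/
theorem stmt_18 (g1 g2 β : ℝ) (hg1 : 0 < g1) (hg2 : 0 < g2) (hβ : 0 < β) :
    ∃ Rs : ℝ, Rs ∈ Set.Ici (-1 : ℝ) ∧
      IsMinOn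
        (fun R : ℝ => ((2:ℝ) ^ R - 1/2) / g1 + ((2:ℝ) ^ R - 1/2) / g2 - β * R)
        (Set.Ici (-1 : ℝ)) Rs ∧
      ((2:ℝ) ^ Rs - 1/2) / g1 + ((2:ℝ) ^ Rs - 1/2) / g2
        = max (β / Real.log 2 - (1/2) * (1 / g1 + 1 / g2)) 0 ∧
      (0 < max (β / Real.log 2 - (1/2) * (1 / g1 + 1 / g2)) 0 →
        ((2:ℝ) ^ Rs - 1/2) / g1
            = max (β / Real.log 2 * g2 / (g1 + g2) - 1 / (2 * g1)) 0 ∧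
        ((2:ℝ) ^ Rs - 1/2) / g2
            = max (β / Real.log 2 * g1 / (g1 + g2) - 1 / (2 * g2)) 0) := by
  have hL : 0 < Real.log 2 := Real.log_pos (by norm_num)
  have hg1' : g1 ≠ 0 := hg1.ne'
  have hg2' : g2 ≠ 0 := hg2.ne'
  have hL' : Real.log 2 ≠ 0 := hL.ne'
  set L := Real.log 2 with hLdef
  set c : ℝ := 1 / g1 + 1 / g2 with hcdef
  have hc : 0 < c := by positivity
  have hc' : c ≠ 0 := hc.ne'
  have hhalf : (2:ℝ) ^ (-1 : ℝ) = 1/2 := by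
    rw [Real.rpow_neg_one]; norm_num
  have e1 : ∀ x : ℝ, (x - 1/2) / g1 + (x - 1/2) / g2 = (x - 1/2) * c := by
    intro x; rw [hcdef]; field_simp
  by_cases h : β / L ≤ (1/2) * c
  · -- boundary case: Rs = -1, total power 0
    refine ⟨-1, Set.mem_Ici.mpr le_rfl, ?_, ?_, ?_⟩
    · intro R hR
      simp only [Set.mem_Ici, Set.mem_setOf_eq] at hR ⊢
      have hk := key_exp R (-1)
      rw [hhalf, ← hLdef] at hk
      have hβL : β ≤ (1/2) * c * L := by
        rw [div_le_iff₀ hL] at h; linarith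
      rw [e1, e1, hhalf]
      have hR1 : 0 ≤ R + 1 := by linarith
      have h3 : 0 ≤ (R + 1) * ((1/2) * c * L - β) :=
        mul_nonneg hR1 (by linarith)
      nlinarith [mul_le_mul_of_nonneg_right hk hc.le]
    · rw [hhalf]
      rw [max_eq_right (by linarith : β / L - (1/2) * c ≤ 0)]
      norm_num
    · intro hpos
      rw [max_eq_right (by linarith : β / L - (1/2) * c ≤ 0)] at hpos
      exact absurd hpos (lt_irrefl 0)
  · -- interior case
    push_neg at h
    have hacL : 0 < β / (c * L) := by positivity
    have ha : (2:ℝ) ^ Real.logb 2 (β / (c * L)) = β / (c * L) :=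
      Real.rpow_logb two_pos (by norm_num) hacL
    have hgg : 0 < g1 + g2 := by linarith
    have hkey : (g1 + g2) * L < β * (2 * g1 * g2) := by
      rw [lt_div_iff₀ hL, hcdef] at h
      have hmm := mul_lt_mul_of_pos_right h (by positivity : (0:ℝ) < 2 * (g1 * g2))
      have hid : 1 / 2 * (1 / g1 + 1 / g2) * L * (2 * (g1 * g2)) = (g1 + g2) * L := by
        field_simp
        ring
      rw [hid] at hmm
      nlinarith
    refine ⟨Real.logb 2 (β / (c * L)), ?_, ?_, ?_, ?_⟩
    · simp only [Set.mem_Ici]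
      have h12 : (1:ℝ)/2 < β / (c * L) := by
        rw [lt_div_iff₀ (by positivity : (0:ℝ) < c * L)]
        rw [lt_div_iff₀ hL] at h
        nlinarith
      by_contra hcon
      push_neg at hcon
      have := (Real.rpow_lt_rpow_left_iff (x := 2)
        (by norm_num : (1:ℝ) < 2)).mpr hcon
      rw [ha, hhalf] at this
      linarith
    · intro R hR
      simp only [Set.mem_Ici, Set.mem_setOf_eq] at hR ⊢
      set Rs := Real.logb 2 (β / (c * L)) with hRs
      have hk := key_exp R Rs
      rw [ha, ← hLdef] at hk
      rw [e1, e1, ha]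
      have hmul := mul_le_mul_of_nonneg_right hk hc.le
      have key2 : β / (c * L) * (1 + (R - Rs) * L) * c
          = β / (c * L) * c + β * (R - Rs) := by
        field_simp
      rw [key2] at hmul
      linarith
    · rw [ha, max_eq_left (by linarith : (0:ℝ) ≤ β / L - (1/2) * c), hcdef]
      field_simp
    · intro _
      rw [ha]
      constructor
      · have hpos1 : 0 ≤ β / L * g2 / (g1 + g2) - 1 / (2 * g1) := by
          rw [sub_nonneg, div_le_div_iff₀ (by positivity) hgg, div_mul_eq_mul_div,
            div_mul_eq_mul_div, le_div_iff₀ hL]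
          nlinarith
        rw [max_eq_left hpos1, hcdef]
        field_simp
        ring
      · have hpos2 : 0 ≤ β / L * g1 / (g1 + g2) - 1 / (2 * g2) := by
          rw [sub_nonneg, div_le_div_iff₀ (by positivity) hgg, div_mul_eq_mul_div,
            div_mul_eq_mul_div, le_div_iff₀ hL]
          nlinarith
        rw [max_eq_left hpos2, hcdef]
        field_simp
        ring
end
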